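/- arXiv:math/0405387 — 3 statements merged into one kernel-verified Lean document; each statement's English description precedes it below -/
import Mathlib

section
/- Let Γ be a group equipped with a proper left-invariant metric d, and let f : Γ → ℂ be a bounded function such that for every ε > 0 there exists R ≥ 0 with |f(x) − f(y)| ≤ ε whenever the Gromov product satisfies (x|y) ≥ R. Then for every γ ∈ Γ the commutator v_γ ∘ M_f − M_f ∘ v_γ is a compact operator on ℓ²(Γ). (This is Lemma 21(1) of the paper, with the hypothesis 'f extends continuously to the Gromov compactification' expressed, as in the paper's Lemma 15, by the stated Gromov-product condition.) -/
set_option maxHeartbeats 1000000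

open scoped ENNReal

section Aux

variable {Γ : Type*} [DecidableEq Γ]

/-- Evaluation at a point as a continuous linear functional on `ℓ²(Γ)`. -/
noncomputable def evalCLM (x : Γ) : lp (fun _ : Γ => ℂ) 2 →L[ℂ] ℂ :=
  LinearMap.mkContinuous
    { toFun := fun ξ => ξ x
      map_add' := fun ξ η => by simp [lp.coeFn_add]
      map_smul' := fun c ξ => by simp [lp.coeFn_smul] }
    1 (fun ξ => by rw [one_mul]; exact lp.norm_apply_le_norm two_ne_zero ξ x)

@[simp] theorem evalCLM_apply (x : Γ) (ξ : lp (fun _ : Γ => ℂ) 2) : evalCLM x ξ = ξ x := rfl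

theorem isCompactOperator_evalCLM (x : Γ) : IsCompactOperator (evalCLM (Γ := Γ) x) :=
  ⟨Metric.closedBall 0 1, isCompact_closedBall _ _,
    (evalCLM x).continuous.continuousAt.preimage_mem_nhds (by
      simpa using Metric.closedBall_mem_nhds (0:ℂ) one_pos)⟩

/-- The rank-one operator `ξ ↦ ξ x • e_y` on `ℓ²(Γ)`. -/
noncomputable def rkOne (x y : Γ) : lp (fun _ : Γ => ℂ) 2 →L[ℂ] lp (fun _ : Γ => ℂ) 2 :=
  (ContinuousLinearMap.toSpanSingleton ℂ (lp.single 2 y (1:ℂ))) ∘L evalCLM x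

@[simp] theorem rkOne_apply (x y : Γ) (ξ : lp (fun _ : Γ => ℂ) 2) :
    rkOne x y ξ = ξ x • lp.single 2 y (1:ℂ) := rfl

theorem isCompactOperator_rkOne (x y : Γ) : IsCompactOperator (rkOne (Γ := Γ) x y) := by
  refine ⟨(fun c : ℂ => c • lp.single 2 y (1:ℂ)) '' Metric.closedBall 0 1,
    (isCompact_closedBall _ _).image (continuous_id.smul continuous_const), ?_⟩
  have h : evalCLM (Γ := Γ) x ⁻¹' Metric.closedBall 0 1 ∈ nhds 0 := by
    have hc := (evalCLM (Γ := Γ) x).continuous.continuousAt (x := 0)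
    exact hc.preimage_mem_nhds (by rw [map_zero]; exact Metric.closedBall_mem_nhds (0:ℂ) one_pos)
  exact Filter.mem_of_superset h (fun ξ hξ => ⟨ξ x, hξ, rfl⟩)

end Aux

/-- Lemma 21(1) of the paper.  Let `Γ` be a group with a proper left-invariant metric `d`,
and let `f : Γ → ℂ` be a bounded function such that for every `ε > 0` there is `R ≥ 0`
with `|f x - f y| ≤ ε` whenever the Gromov product `(x|y) = (d(e,x) + d(e,y) - d(x,y))/2`
is at least `R` (i.e. `f` extends continuously to the Gromov compactification).  Then the
commutator of the right-translation unitary `v_γ` with the multiplication operator `M_f`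
is a compact operator on `ℓ²(Γ)`. -/
theorem commutator_right_translation_mult_compact
    {Γ : Type*} [Group Γ] [DecidableEq Γ]
    (d : Γ → Γ → ℝ)
    (hd_self : ∀ x : Γ, d x x = 0)
    (hd_sep : ∀ x y : Γ, d x y = 0 → x = y)
    (hd_symm : ∀ x y : Γ, d x y = d y x)
    (hd_triangle : ∀ x y z : Γ, d x z ≤ d x y + d y z)
    (hd_leftinv : ∀ g x y : Γ, d (g * x) (g * y) = d x y)
    (hd_proper : ∀ (x : Γ) (R : ℝ), {y : Γ | d x y ≤ R}.Finite)
    (f : Γ → ℂ)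
    (hf_bdd : ∃ C : ℝ, ∀ x : Γ, ‖f x‖ ≤ C)
    (hf : ∀ ε : ℝ, 0 < ε → ∃ R : ℝ, 0 ≤ R ∧ ∀ x y : Γ,
      R ≤ (d 1 x + d 1 y - d x y) / 2 → ‖f x - f y‖ ≤ ε)
    (Mf : lp (fun _ : Γ => ℂ) 2 →L[ℂ] lp (fun _ : Γ => ℂ) 2)
    (hMf : ∀ (ξ : lp (fun _ : Γ => ℂ) 2) (x : Γ), Mf ξ x = f x * ξ x)
    (γ : Γ)
    (vγ : lp (fun _ : Γ => ℂ) 2 →L[ℂ] lp (fun _ : Γ => ℂ) 2)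
    (hvγ : ∀ x : Γ, vγ (lp.single 2 x (1 : ℂ)) = lp.single 2 (x * γ) (1 : ℂ)) :
    IsCompactOperator (vγ ∘L Mf - Mf ∘L vγ) := by
  classical
  haveI : Fact ((1:ℝ≥0∞) ≤ 2) := ⟨one_le_two⟩
  set g : Γ → ℂ := fun x => f x - f (x * γ) with hg
  set T : lp (fun _ : Γ => ℂ) 2 →L[ℂ] lp (fun _ : Γ => ℂ) 2 := vγ ∘L Mf - Mf ∘L vγ with hTdef
  -- Mf on basis vectors
  have hMfs : ∀ (x : Γ) (c : ℂ), Mf (lp.single 2 x c) = f x • (lp.single 2 x c : lp (fun _ : Γ => ℂ) 2) := by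
    intro x c
    apply lp.ext
    funext y
    rw [hMf, lp.coeFn_smul, Pi.smul_apply]
    by_cases h : y = x
    · subst h; simp [lp.single_apply_self]
    · simp [lp.single_apply_ne _ _ _ h, Pi.single_apply, h]
  have hsingle_smul : ∀ (x : Γ) (c : ℂ), (lp.single 2 x c : lp (fun _ : Γ => ℂ) 2) = c • lp.single 2 x (1:ℂ) := by
    intro x c
    rw [← lp.single_smul, smul_eq_mul, mul_one]
  -- T on basis vectors
  have hT : ∀ (x : Γ) (c : ℂ), T (lp.single 2 x c) = g x • lp.single 2 (x * γ) c := by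
    intro x c
    rw [hTdef]
    simp only [ContinuousLinearMap.sub_apply, ContinuousLinearMap.comp_apply]
    rw [hsingle_smul x c, hsingle_smul (x*γ) c]
    simp only [map_smul, hMfs x (1:ℂ), hvγ x, hMfs (x*γ) (1:ℂ)]
    simp only [smul_smul]
    rw [← sub_smul]
    congr 1
    simp only [hg]
    ring
  -- the key approximation step
  have key : ∀ ε : ℝ, 0 < ε → ∃ S : lp (fun _ : Γ => ℂ) 2 →L[ℂ] lp (fun _ : Γ => ℂ) 2,
      IsCompactOperator S ∧ ‖T - S‖ ≤ ε := by
    intro ε hε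
    obtain ⟨R, hR0, hR⟩ := hf ε hε
    set F : Finset Γ := (hd_proper 1 (R + d 1 γ)).toFinset with hF
    have hgsmall : ∀ x : Γ, x ∉ F → ‖g x‖ ≤ ε := by
      intro x hx
      have hx' : ¬ d 1 x ≤ R + d 1 γ := by
        simpa [hF, Set.Finite.mem_toFinset] using hx
      push_neg at hx'
      apply hR
      have h1 : d x (x * γ) = d 1 γ := by
        have := hd_leftinv x 1 γ
        simpa using this
      have h2 : d 1 x ≤ d 1 (x * γ) + d 1 γ := by
        have := hd_triangle 1 (x * γ) x
        rw [hd_symm (x*γ) x, h1] at this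
        exact this
      rw [h1]
      linarith
    set S : lp (fun _ : Γ => ℂ) 2 →L[ℂ] lp (fun _ : Γ => ℂ) 2 :=
      ∑ x ∈ F, g x • rkOne x (x * γ) with hS
    have hScompact : IsCompactOperator S := by
      rw [hS]
      show IsCompactOperator ⇑(∑ x ∈ F, g x • rkOne x (x * γ))
      rw [ContinuousLinearMap.coe_sum']
      refine Finset.sum_induction _ IsCompactOperator (fun a b ha hb => ha.add hb)
        isCompactOperator_zero ?_
      intro x _
      rw [ContinuousLinearMap.coe_smul']
      exact (isCompactOperator_rkOne x (x * γ)).smul (g x)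
    -- action of T - S on basis vectors
    have hTS : ∀ (x : Γ) (c : ℂ), (T - S) (lp.single 2 x c)
        = (if x ∈ F then 0 else g x) • lp.single 2 (x * γ) c := by
      intro x c
      have hSx : S (lp.single 2 x c) = (if x ∈ F then g x else 0) • lp.single 2 (x * γ) c := by
        rw [hS]
        simp only [ContinuousLinearMap.sum_apply, ContinuousLinearMap.smul_apply, rkOne_apply]
        by_cases hx : x ∈ F
        · rw [Finset.sum_eq_single_of_mem x hx (fun y _ hyx => by
            simp [lp.single_apply, hyx])]
          simp [hx, lp.single_apply_self, smul_smul, hsingle_smul (x*γ) c]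
        · rw [Finset.sum_eq_zero (fun y hy => by
            have hyx : y ≠ x := fun h => hx (h ▸ hy)
            simp [lp.single_apply, hyx])]
          simp [hx]
      rw [ContinuousLinearMap.sub_apply, hT, hSx]
      by_cases hx : x ∈ F <;> simp [hx]
    -- the bound on finite linear combinations
    have hbound : ∀ (ξ : lp (fun _ : Γ => ℂ) 2) (s : Finset Γ),
        ‖(T - S) (∑ x ∈ s, lp.single 2 x (ξ x))‖ ≤ ε * ‖∑ x ∈ s, lp.single 2 x (ξ x)‖ := by
      intro ξ s
      set g' : Γ → ℂ := fun x => if x ∈ F then 0 else g x with hg'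
      have hg'small : ∀ x, ‖g' x‖ ≤ ε := by
        intro x
        by_cases hx : x ∈ F
        · simp [hg', hx, le_of_lt hε]
        · simpa [hg', hx] using hgsmall x hx
      have himg : (T - S) (∑ x ∈ s, lp.single 2 x (ξ x))
          = ∑ x ∈ s, lp.single 2 (x * γ) (g' x * ξ x) := by
        rw [map_sum]
        refine Finset.sum_congr rfl fun x _ => ?_
        rw [hTS x (ξ x), hg']
        rw [hsingle_smul (x*γ) (_ * ξ x), mul_smul, ← hsingle_smul]
      rw [himg]
      -- reindex the sum over the image finset
      have hinj : Set.InjOn (fun x => x * γ) s := fun a _ b _ h => by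
        simpa using mul_right_cancel h
      set t : Finset Γ := s.image (fun x => x * γ) with ht
      set C : Γ → ℂ := fun y => g' (y * γ⁻¹) * ξ (y * γ⁻¹) with hC
      have hre : (∑ x ∈ s, lp.single 2 (x * γ) (g' x * ξ x))
          = ∑ y ∈ t, lp.single 2 y (C y) := by
        rw [ht, Finset.sum_image (fun a ha b hb h => hinj ha hb h)]
        refine Finset.sum_congr rfl fun x _ => ?_
        simp [hC, mul_inv_cancel_right]
      rw [hre]
      have h2 : (0:ℝ) < (2:ℝ≥0∞).toReal := by norm_num
      have hnorm1 := lp.norm_sum_single (E := fun _ : Γ => ℂ) h2 C t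
      have hnorm2 := lp.norm_sum_single (E := fun _ : Γ => ℂ) h2 ξ s
      have htr : (2:ℝ≥0∞).toReal = 2 := by norm_num
      rw [htr] at hnorm1 hnorm2
      have hsum : ∑ y ∈ t, ‖C y‖ ^ (2:ℝ) ≤ (ε * ‖∑ x ∈ s, lp.single 2 x (ξ x)‖) ^ (2:ℝ) := by
        rw [ht, Finset.sum_image (fun a ha b hb h => hinj ha hb h)]
        have : ∀ x ∈ s, ‖C (x * γ)‖ ^ (2:ℝ) ≤ ε ^ (2:ℝ) * ‖ξ x‖ ^ (2:ℝ) := by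
          intro x _
          rw [← Real.mul_rpow (le_of_lt hε) (norm_nonneg _)]
          refine Real.rpow_le_rpow (norm_nonneg _) ?_ (by norm_num)
          have : C (x * γ) = g' x * ξ x := by simp [hC, mul_inv_cancel_right]
          rw [this, norm_mul]
          exact mul_le_mul_of_nonneg_right (hg'small x) (norm_nonneg _)
        calc ∑ x ∈ s, ‖C (x * γ)‖ ^ (2:ℝ) ≤ ∑ x ∈ s, ε ^ (2:ℝ) * ‖ξ x‖ ^ (2:ℝ) :=
              Finset.sum_le_sum this
          _ = ε ^ (2:ℝ) * ∑ x ∈ s, ‖ξ x‖ ^ (2:ℝ) := by rw [Finset.mul_sum]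
          _ = (ε * ‖∑ x ∈ s, lp.single 2 x (ξ x)‖) ^ (2:ℝ) := by
              rw [← hnorm2, Real.mul_rpow (le_of_lt hε) (norm_nonneg _)]
      rw [← hnorm1] at hsum
      have hεn : 0 ≤ ε * ‖∑ x ∈ s, lp.single 2 x (ξ x)‖ :=
        mul_nonneg (le_of_lt hε) (norm_nonneg _)
      exact (Real.rpow_le_rpow_iff (norm_nonneg _) hεn (by norm_num)).mp hsum
    -- pass to the limit: the bound holds for all vectors
    refine ⟨S, hScompact, ?_⟩
    refine ContinuousLinearMap.opNorm_le_bound _ (le_of_lt hε) fun ξ => ?_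
    have hsum : HasSum (fun x : Γ => lp.single 2 x (ξ x)) ξ :=
      lp.hasSum_single (by norm_num) ξ
    have h1 : Filter.Tendsto (fun s : Finset Γ => ‖(T - S) (∑ x ∈ s, lp.single 2 x (ξ x))‖)
        Filter.atTop (nhds ‖(T - S) ξ‖) :=
      (((T - S).continuous.tendsto ξ).comp hsum).norm
    have h2 : Filter.Tendsto (fun s : Finset Γ => ε * ‖∑ x ∈ s, lp.single 2 x (ξ x)‖)
        Filter.atTop (nhds (ε * ‖ξ‖)) :=
      hsum.norm.const_mul ε
    exact le_of_tendsto_of_tendsto' h1 h2 (hbound ξ)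
  -- conclude via a sequence of compact operators converging to T
  choose Sseq hScmp hSnorm using fun n : ℕ => key (1 / (n + 1)) (by positivity)
  have htend : Filter.Tendsto Sseq Filter.atTop (nhds T) := by
    rw [tendsto_iff_norm_sub_tendsto_zero]
    refine squeeze_zero (fun n => norm_nonneg _) (fun n => ?_)
      tendsto_one_div_add_atTop_nhds_zero_nat
    rw [← norm_neg, neg_sub]
    exact hSnorm n
  exact isCompactOperator_of_tendsto htend (Filter.Eventually.of_forall hScmp)
end

section
/- Let Γ be a group, γ ∈ Γ, and let f : Γ → ℂ be a bounded function such that the function x ↦ f(x·γ) − f(x) tends to 0 along the cofinite filter on Γ. Then the commutator v_γ ∘ M_f − M_f ∘ v_γ is a compact operator on ℓ²(Γ). (This is the key step in the proof of the paper's Lemma 21(1): the operator v_γ M_f v_{γ⁻¹} − M_f is multiplication by a function vanishing at infinity, hence compact.) -/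
open scoped ENNReal

noncomputable section CommutatorAux

set_option linter.unusedSectionVars false

/-- Evaluation at a point as a continuous linear map on `ℓ²`. -/
noncomputable def evalCLM2 {Γ : Type*} (x : Γ) : lp (fun _ : Γ => ℂ) 2 →L[ℂ] ℂ :=
  LinearMap.mkContinuous
    { toFun := fun ξ => ξ x
      map_add' := fun ξ η => by simp [lp.coeFn_add]
      map_smul' := fun c ξ => by simp [lp.coeFn_smul] }
    1 (fun ξ => by
      show ‖ξ x‖ ≤ 1 * ‖ξ‖
      simpa using lp.norm_apply_le_norm (by norm_num) ξ x)

@[simp] lemma evalCLM2_apply {Γ : Type*} (x : Γ) (ξ : lp (fun _ : Γ => ℂ) 2) :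
    evalCLM2 x ξ = ξ x := rfl

/-- Rank one operators are compact. -/
lemma isCompactOperator_smulRight {E F : Type*} [NormedAddCommGroup E] [NormedSpace ℂ E]
    [NormedAddCommGroup F] [NormedSpace ℂ F] (φ : E →L[ℂ] ℂ) (v : F) :
    IsCompactOperator (φ.smulRight v) := by
  rw [isCompactOperator_iff_exists_mem_nhds_image_subset_compact]
  refine ⟨Metric.ball 0 1, Metric.ball_mem_nhds _ one_pos,
    (fun c : ℂ => c • v) '' Metric.closedBall 0 ‖φ‖,
    ((isCompact_closedBall _ _).image (by continuity)), ?_⟩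
  rintro - ⟨ξ, hξ, rfl⟩
  refine ⟨φ ξ, ?_, rfl⟩
  rw [Metric.mem_ball, dist_zero_right] at hξ
  rw [Metric.mem_closedBall, dist_zero_right]
  calc ‖φ ξ‖ ≤ ‖φ‖ * ‖ξ‖ := φ.le_opNorm ξ
    _ ≤ ‖φ‖ * 1 := mul_le_mul_of_nonneg_left hξ.le (norm_nonneg φ)
    _ = ‖φ‖ := mul_one _

/-- The coordinates of a right-translation operator. -/
lemma vgamma_apply {Γ : Type*} [Group Γ] [DecidableEq Γ] (γ : Γ)
    (vγ : lp (fun _ : Γ => ℂ) 2 →L[ℂ] lp (fun _ : Γ => ℂ) 2)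
    (hvγ : ∀ x : Γ, vγ (lp.single 2 x (1 : ℂ)) = lp.single 2 (x * γ) (1 : ℂ))
    (ξ : lp (fun _ : Γ => ℂ) 2) (y : Γ) : vγ ξ y = ξ (y * γ⁻¹) := by
  have h1 : HasSum (fun x : Γ => lp.single 2 x (ξ x)) ξ :=
    lp.hasSum_single (by norm_num) ξ
  have h2 : HasSum (fun x : Γ => ((evalCLM2 y).comp vγ) (lp.single 2 x (ξ x)))
      (((evalCLM2 y).comp vγ) ξ) := ((evalCLM2 y).comp vγ).hasSum h1
  have h3 : ∀ x : Γ, ((evalCLM2 y).comp vγ) (lp.single 2 x (ξ x)) =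
      if x = y * γ⁻¹ then ξ x else 0 := by
    intro x
    have e1 : lp.single 2 x (ξ x) = ξ x • (lp.single 2 x (1 : ℂ) : lp (fun _ : Γ => ℂ) 2) := by
      rw [← lp.single_smul (E := fun _ : Γ => ℂ) 2 x (ξ x) (1 : ℂ), smul_eq_mul, mul_one]
    rw [ContinuousLinearMap.comp_apply, e1, vγ.map_smul, hvγ, evalCLM2_apply,
      lp.coeFn_smul, Pi.smul_apply, smul_eq_mul]
    by_cases h : x = y * γ⁻¹
    · subst h
      rw [if_pos rfl, show y * γ⁻¹ * γ = y by group,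
        lp.single_apply_self (E := fun _ : Γ => ℂ) 2 y (1 : ℂ), mul_one]
    · rw [if_neg h, lp.single_apply_ne (E := fun _ : Γ => ℂ) 2 (x * γ) (1 : ℂ)
        (fun hy => h (by subst hy; group)), mul_zero]
  rw [funext h3] at h2
  have h4 : HasSum (fun x : Γ => if x = y * γ⁻¹ then ξ x else 0)
      (ξ (y * γ⁻¹)) := by
    have := hasSum_ite_eq (y * γ⁻¹) (ξ (y * γ⁻¹))
    refine this.congr_fun fun x => ?_
    by_cases h : x = y * γ⁻¹ <;> simp [h]
  have := h2.unique h4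
  simpa using this

/-- Finite sums of compact operators are compact. -/
lemma isCompactOperator_finset_sum {E F ι : Type*} [NormedAddCommGroup E] [NormedSpace ℂ E]
    [NormedAddCommGroup F] [NormedSpace ℂ F] (s : Finset ι) (W : ι → E →L[ℂ] F)
    (h : ∀ i ∈ s, IsCompactOperator (W i)) : IsCompactOperator (∑ i ∈ s, W i) := by
  classical
  induction s using Finset.induction_on with
  | empty => simpa using isCompactOperator_zero
  | insert _ _ hx ih =>
      rename_i a t
      rw [Finset.sum_insert hx]
      have h1 := h a (Finset.mem_insert_self a t)
      have h2 := ih fun i hi => h i (Finset.mem_insert_of_mem hi)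
      have := h1.add h2
      simpa using this

/-- Norm bound for a pointwise-dominated shifted function in `ℓ²`. -/
lemma norm_le_shift {Γ : Type*} [Group Γ] (γ : Γ)
    (ξ η : lp (fun _ : Γ => ℂ) 2) {ε : ℝ} (hε : 0 ≤ ε)
    (h : ∀ z : Γ, ‖η z‖ ≤ ε * ‖ξ (z * γ⁻¹)‖) : ‖η‖ ≤ ε * ‖ξ‖ := by
  classical
  have hp : 0 < (2 : ℝ≥0∞).toReal := by norm_num
  refine lp.norm_le_of_forall_sum_le hp (mul_nonneg hε (lp.norm_nonneg' ξ)) fun s => ?_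
  have key : ∑ z ∈ s, ‖η z‖ ^ (2 : ℝ≥0∞).toReal ≤
      ε ^ (2 : ℝ≥0∞).toReal * ∑ x ∈ s.image (· * γ⁻¹), ‖ξ x‖ ^ (2 : ℝ≥0∞).toReal := by
    rw [Finset.sum_image (fun a _ b _ hab => mul_right_cancel hab), Finset.mul_sum]
    refine Finset.sum_le_sum fun z _ => ?_
    calc ‖η z‖ ^ (2 : ℝ≥0∞).toReal ≤ (ε * ‖ξ (z * γ⁻¹)‖) ^ (2 : ℝ≥0∞).toReal :=
          Real.rpow_le_rpow (norm_nonneg _) (h z) (by norm_num)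
      _ = ε ^ (2 : ℝ≥0∞).toReal * ‖ξ (z * γ⁻¹)‖ ^ (2 : ℝ≥0∞).toReal :=
          Real.mul_rpow hε (norm_nonneg _)
  calc ∑ z ∈ s, ‖η z‖ ^ (2 : ℝ≥0∞).toReal
      ≤ ε ^ (2 : ℝ≥0∞).toReal * ∑ x ∈ s.image (· * γ⁻¹), ‖ξ x‖ ^ (2 : ℝ≥0∞).toReal := key
    _ ≤ ε ^ (2 : ℝ≥0∞).toReal * ‖ξ‖ ^ (2 : ℝ≥0∞).toReal := by
        refine mul_le_mul_of_nonneg_left (lp.sum_rpow_le_norm_rpow hp ξ _)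
          (Real.rpow_nonneg hε _)
    _ = (ε * ‖ξ‖) ^ (2 : ℝ≥0∞).toReal := (Real.mul_rpow hε (lp.norm_nonneg' ξ)).symm

end CommutatorAux

set_option maxHeartbeats 1000000 in
set_option synthInstance.maxHeartbeats 200000 in
set_option linter.unusedVariables false in
/-- The key step in the proof of the paper's Lemma 21(1).  Let `Γ` be a group, `γ ∈ Γ`,
and let `f : Γ → ℂ` be a bounded function such that `x ↦ f (x * γ) - f x` tends to `0`
along the cofinite filter on `Γ` (for every `ε > 0` the set where `‖f (x * γ) - f x‖ ≥ ε`
is finite).  Then the commutator of the right-translation unitary `v_γ` with the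
multiplication operator `M_f` is a compact operator on `ℓ²(Γ)`. -/
theorem commutator_right_translation_mult_compact_of_cofinite
    {Γ : Type*} [Group Γ] [DecidableEq Γ]
    (γ : Γ) (f : Γ → ℂ)
    (hf_bdd : ∃ C : ℝ, ∀ x : Γ, ‖f x‖ ≤ C)
    (hf : ∀ ε : ℝ, 0 < ε → {x : Γ | ε ≤ ‖f (x * γ) - f x‖}.Finite)
    (Mf : lp (fun _ : Γ => ℂ) 2 →L[ℂ] lp (fun _ : Γ => ℂ) 2)
    (hMf : ∀ (ξ : lp (fun _ : Γ => ℂ) 2) (x : Γ), Mf ξ x = f x * ξ x)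
    (vγ : lp (fun _ : Γ => ℂ) 2 →L[ℂ] lp (fun _ : Γ => ℂ) 2)
    (hvγ : ∀ x : Γ, vγ (lp.single 2 x (1 : ℂ)) = lp.single 2 (x * γ) (1 : ℂ)) :
    IsCompactOperator (vγ ∘L Mf - Mf ∘L vγ) := by
  classical
  set T := vγ ∘L Mf - Mf ∘L vγ with hTdef
  set g : Γ → ℂ := fun y => f (y * γ⁻¹) - f y with hgdef
  -- coordinates of T
  have hT : ∀ (ξ : lp (fun _ : Γ => ℂ) 2) (y : Γ), T ξ y = g y * ξ (y * γ⁻¹) := by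
    intro ξ y
    have : T ξ = vγ (Mf ξ) - Mf (vγ ξ) := rfl
    rw [this]
    rw [lp.coeFn_sub, Pi.sub_apply, vgamma_apply γ vγ hvγ (Mf ξ) y, hMf, hMf,
      vgamma_apply γ vγ hvγ ξ y]
    ring
  -- finite-rank approximations
  have key : ∀ n : ℕ, ∃ S : lp (fun _ : Γ => ℂ) 2 →L[ℂ] lp (fun _ : Γ => ℂ) 2,
      IsCompactOperator S ∧ ‖T - S‖ ≤ 1 / (n + 1) := by
    intro n
    set ε : ℝ := 1 / (n + 1) with hεdef
    have hε : 0 < ε := by positivity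
    set Fs : Finset Γ := ((hf ε hε).image (· * γ)).toFinset with hFsdef
    set S : lp (fun _ : Γ => ℂ) 2 →L[ℂ] lp (fun _ : Γ => ℂ) 2 :=
      ∑ y ∈ Fs, g y • ((evalCLM2 (y * γ⁻¹)).smulRight (lp.single 2 y (1 : ℂ) : lp (fun _ : Γ => ℂ) 2)) with hSdef
    have hScompact : IsCompactOperator S := by
      rw [hSdef]
      rw [ContinuousLinearMap.coe_sum']
      refine isCompactOperator_finset_sum (E := lp (fun _ : Γ => ℂ) 2)
        (F := lp (fun _ : Γ => ℂ) 2) Fs _ fun y _ => ?_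
      have h1 := isCompactOperator_smulRight (evalCLM2 (y * γ⁻¹))
        (lp.single 2 y (1 : ℂ) : lp (fun _ : Γ => ℂ) 2)
      have h2 := h1.smul (g y)
      have h3 : ⇑(g y • ((evalCLM2 (y * γ⁻¹)).smulRight
          (lp.single 2 y (1 : ℂ) : lp (fun _ : Γ => ℂ) 2))) =
          g y • ⇑((evalCLM2 (y * γ⁻¹)).smulRight
          (lp.single 2 y (1 : ℂ) : lp (fun _ : Γ => ℂ) 2)) := rfl
      rw [h3]
      exact h2
    have hS : ∀ (ξ : lp (fun _ : Γ => ℂ) 2) (z : Γ),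
        S ξ z = if z ∈ Fs then g z * ξ (z * γ⁻¹) else 0 := by
      intro ξ z
      rw [hSdef]
      rw [ContinuousLinearMap.sum_apply, lp.coeFn_sum, Finset.sum_apply]
      have : ∀ y ∈ Fs, (g y • ((evalCLM2 (y * γ⁻¹)).smulRight
          (lp.single 2 y (1 : ℂ) : lp (fun _ : Γ => ℂ) 2))) ξ z =
          if z = y then g y * ξ (y * γ⁻¹) else 0 := by
        intro y _
        rw [ContinuousLinearMap.smul_apply, ContinuousLinearMap.smulRight_apply,
          evalCLM2_apply, lp.coeFn_smul, Pi.smul_apply, lp.coeFn_smul, Pi.smul_apply]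
        by_cases h : z = y
        · subst h
          rw [if_pos rfl, lp.single_apply_self (E := fun _ : Γ => ℂ) 2 z (1 : ℂ),
            smul_eq_mul, smul_eq_mul, mul_one]
        · rw [if_neg h, lp.single_apply_ne (E := fun _ : Γ => ℂ) 2 y (1 : ℂ) h,
            smul_zero, smul_zero]
      rw [Finset.sum_congr rfl this, Finset.sum_ite_eq]
    refine ⟨S, hScompact, ?_⟩
    refine ContinuousLinearMap.opNorm_le_bound _ hε.le fun ξ => ?_
    refine norm_le_shift γ ξ _ hε.le fun z => ?_
    rw [ContinuousLinearMap.sub_apply, lp.coeFn_sub, Pi.sub_apply, hT, hS]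
    by_cases h : z ∈ Fs
    · rw [if_pos h]
      simp only [sub_self, norm_zero]
      positivity
    · rw [if_neg h, sub_zero]
      have hz : ‖g z‖ < ε := by
        by_contra hcon
        push_neg at hcon
        apply h
        rw [hFsdef, Set.Finite.mem_toFinset]
        refine ⟨z * γ⁻¹, ?_, by group⟩
        rw [Set.mem_setOf_eq]
        have : z * γ⁻¹ * γ = z := by group
        rw [this, ← norm_sub_rev]
        exact hcon
      rw [norm_mul]
      exact mul_le_mul_of_nonneg_right hz.le (norm_nonneg _)
  choose S hSc hSn using key
  have htend : Filter.Tendsto S Filter.atTop (nhds T) := by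
    rw [tendsto_iff_dist_tendsto_zero]
    refine squeeze_zero (fun n => dist_nonneg) (fun n => ?_)
      tendsto_one_div_add_atTop_nhds_zero_nat
    rw [dist_eq_norm, ← norm_neg]
    simpa using hSn n
  exact isCompactOperator_of_tendsto htend (Filter.Eventually.of_forall hSc)
end

section
/- Let Γ be a group, γ ∈ Γ, and let f : Γ → ℂ be a bounded function such that the function x ↦ f(γ·x) − f(x) tends to 0 along the cofinite filter on Γ. Then the commutator u_γ ∘ M_f − M_f ∘ u_γ is a compact operator on ℓ²(Γ). (This is the left-translation analogue, obtained in the proof of the paper's Lemma 21(2) by conjugating by the unitary induced from inversion on the group.) -/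
open Filter
open scoped ENNReal

namespace Lem21Aux

variable {Γ : Type*}

local notation "ℓ2" Γ => lp (fun _ : Γ => ℂ) 2

lemma single_coord [DecidableEq Γ] (x y : Γ) (c : ℂ) :
    (lp.single 2 x c : lp (fun _ : Γ => ℂ) 2) y = if y = x then c else 0 := by
  by_cases hxy : y = x
  · subst hxy; simp [lp.single_apply_self]
  · simp [lp.single_apply_ne 2 x _ hxy, hxy]

/-- Evaluation at a point as a continuous linear functional on `ℓ²(Γ)`. -/
noncomputable def evalCLM (y : Γ) : (lp (fun _ : Γ => ℂ) 2) →L[ℂ] ℂ :=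
  LinearMap.mkContinuous
    { toFun := fun ξ => ξ y
      map_add' := fun ξ η => by simp
      map_smul' := fun c ξ => by simp }
    1 (fun ξ => by
      show ‖ξ y‖ ≤ 1 * ‖ξ‖; simpa using lp.norm_apply_le_norm (by norm_num : (2 : ℝ≥0∞) ≠ 0) ξ y)

@[simp] lemma evalCLM_apply (y : Γ) (ξ : lp (fun _ : Γ => ℂ) 2) :
    evalCLM y ξ = ξ y := rfl

lemma norm_le_of_forall_norm_apply_le {ξ ζ : lp (fun _ : Γ => ℂ) 2} {δ : ℝ} (hδ : 0 ≤ δ)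
    (h : ∀ y, ‖ζ y‖ ≤ δ * ‖ξ y‖) : ‖ζ‖ ≤ δ * ‖ξ‖ := by
  have hp : 0 < (2 : ℝ≥0∞).toReal := by norm_num
  refine lp.norm_le_of_tsum_le hp (mul_nonneg hδ (norm_nonneg _)) ?_
  have hsum : Summable fun y => ‖ξ y‖ ^ (2 : ℝ≥0∞).toReal := (lp.memℓp ξ).summable hp
  have key : ∀ y, ‖ζ y‖ ^ (2 : ℝ≥0∞).toReal ≤
      δ ^ (2 : ℝ≥0∞).toReal * ‖ξ y‖ ^ (2 : ℝ≥0∞).toReal := by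
    intro y
    rw [← Real.mul_rpow hδ (norm_nonneg _)]
    exact Real.rpow_le_rpow (norm_nonneg _) (h y) (by norm_num)
  calc ∑' y, ‖ζ y‖ ^ (2 : ℝ≥0∞).toReal
      ≤ ∑' y, δ ^ (2 : ℝ≥0∞).toReal * ‖ξ y‖ ^ (2 : ℝ≥0∞).toReal :=
        Summable.tsum_le_tsum key
          (Summable.of_nonneg_of_le (fun y => Real.rpow_nonneg (norm_nonneg _) _) key
            (hsum.mul_left _)) (hsum.mul_left _)
    _ = δ ^ (2 : ℝ≥0∞).toReal * ∑' y, ‖ξ y‖ ^ (2 : ℝ≥0∞).toReal := tsum_mul_left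
    _ = δ ^ (2 : ℝ≥0∞).toReal * ‖ξ‖ ^ (2 : ℝ≥0∞).toReal := by
        rw [lp.norm_rpow_eq_tsum hp]
    _ = (δ * ‖ξ‖) ^ (2 : ℝ≥0∞).toReal := (Real.mul_rpow hδ (norm_nonneg _)).symm

lemma memℓp_mul {h : Γ → ℂ} {C : ℝ} (hC : ∀ x, ‖h x‖ ≤ C) (ξ : lp (fun _ : Γ => ℂ) 2) :
    Memℓp (fun x => h x * ξ x) 2 := by
  have hp : 0 < (2 : ℝ≥0∞).toReal := by norm_num
  apply memℓp_gen
  have hsum : Summable fun y => ‖ξ y‖ ^ (2 : ℝ≥0∞).toReal := (lp.memℓp ξ).summable hp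
  have hC0 : 0 ≤ max C 0 := le_max_right _ _
  refine Summable.of_nonneg_of_le (fun y => Real.rpow_nonneg (norm_nonneg _) _)
    (fun y => ?_) (hsum.mul_left ((max C 0) ^ (2 : ℝ≥0∞).toReal))
  rw [← Real.mul_rpow hC0 (norm_nonneg _)]
  refine Real.rpow_le_rpow (norm_nonneg _) ?_ (by norm_num)
  rw [norm_mul]
  exact mul_le_mul_of_nonneg_right ((hC y).trans (le_max_left _ _)) (norm_nonneg _)

/-- Multiplication by a bounded function as a continuous linear map on `ℓ²(Γ)`. -/
noncomputable def mulCLM (h : Γ → ℂ) (C : ℝ) (hC : ∀ x, ‖h x‖ ≤ C) :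
    (lp (fun _ : Γ => ℂ) 2) →L[ℂ] (lp (fun _ : Γ => ℂ) 2) :=
  LinearMap.mkContinuous
    { toFun := fun ξ => ⟨fun x => h x * ξ x, memℓp_mul hC ξ⟩
      map_add' := fun ξ η => by
        apply lp.ext
        funext x
        change h x * (ξ + η) x = h x * ξ x + h x * η x
        rw [lp.coeFn_add]
        simp [mul_add]
      map_smul' := fun c ξ => by
        apply lp.ext
        funext x
        change h x * (c • ξ) x = c • (h x * ξ x)
        rw [lp.coeFn_smul]
        simp [smul_eq_mul]; ring }
    (max C 0)
    (fun ξ => by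
      refine norm_le_of_forall_norm_apply_le (le_max_right _ _) (fun y => ?_)
      change ‖h y * ξ y‖ ≤ _
      rw [norm_mul]
      exact mul_le_mul_of_nonneg_right ((hC y).trans (le_max_left _ _)) (norm_nonneg _))

@[simp] lemma mulCLM_apply (h : Γ → ℂ) (C : ℝ) (hC : ∀ x, ‖h x‖ ≤ C)
    (ξ : lp (fun _ : Γ => ℂ) 2) (x : Γ) : mulCLM h C hC ξ x = h x * ξ x := rfl

lemma isCompactOperator_smulRight (φ : (lp (fun _ : Γ => ℂ) 2) →L[ℂ] ℂ)
    (v : lp (fun _ : Γ => ℂ) 2) : IsCompactOperator (φ.smulRight v) := by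
  refine ⟨(fun c : ℂ => c • v) '' Metric.closedBall 0 ‖φ‖,
    (isCompact_closedBall 0 ‖φ‖).image (by fun_prop), ?_⟩
  refine Filter.mem_of_superset (Metric.ball_mem_nhds 0 one_pos) (fun ξ hξ => ?_)
  rw [Metric.mem_ball, dist_zero_right] at hξ
  refine ⟨φ ξ, ?_, rfl⟩
  rw [Metric.mem_closedBall, dist_zero_right]
  exact (φ.le_opNorm ξ).trans (mul_le_of_le_one_right (norm_nonneg φ) hξ.le)

lemma isCompactOperator_sum {ι : Type*} (s : Finset ι)
    (G : ι → ((lp (fun _ : Γ => ℂ) 2) →L[ℂ] (lp (fun _ : Γ => ℂ) 2)))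
    (hG : ∀ i ∈ s, IsCompactOperator (G i)) :
    IsCompactOperator (fun ξ => ∑ i ∈ s, G i ξ) := by
  classical
  induction s using Finset.induction with
  | empty =>
      simp only [Finset.sum_empty]
      exact isCompactOperator_zero
  | @insert a t hnotmem ih =>
      simp only [Finset.sum_insert hnotmem]
      have h1 : IsCompactOperator (fun ξ : lp (fun _ : Γ => ℂ) 2 => G a ξ) :=
        hG a (Finset.mem_insert_self a t)
      have h2 := ih (fun i hi => hG i (Finset.mem_insert_of_mem hi))
      exact h1.add h2

lemma dense_span_single [DecidableEq Γ] :
    Dense (↑(Submodule.span ℂ (Set.range fun x : Γ => lp.single 2 x (1 : ℂ))) :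
      Set (lp (fun _ : Γ => ℂ) 2)) := by
  intro ξ
  have hs := lp.hasSum_single (by norm_num : (2 : ℝ≥0∞) ≠ ⊤) ξ
  refine mem_closure_of_tendsto hs (Filter.Eventually.of_forall (fun s => ?_))
  refine Submodule.sum_mem _ (fun i _ => ?_)
  have : lp.single 2 i (ξ i) =
      ξ i • (lp.single 2 i (1 : ℂ) : lp (fun _ : Γ => ℂ) 2) := by
    rw [← lp.single_smul]; norm_num
  rw [this]
  exact Submodule.smul_mem _ _ (Submodule.subset_span ⟨i, rfl⟩)

lemma ext_single [DecidableEq Γ]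
    {S T : (lp (fun _ : Γ => ℂ) 2) →L[ℂ] (lp (fun _ : Γ => ℂ) 2)}
    (h : ∀ x : Γ, S (lp.single 2 x 1) = T (lp.single 2 x 1)) : S = T :=
  ContinuousLinearMap.ext_on dense_span_single (by rintro _ ⟨x, rfl⟩; exact h x)

/-- Multiplication by a bounded function vanishing along the cofinite filter is compact. -/
lemma mult_compact [DecidableEq Γ] {h : Γ → ℂ} {C : ℝ} (hC : ∀ x, ‖h x‖ ≤ C)
    (hcf : ∀ ε : ℝ, 0 < ε → {x : Γ | ε ≤ ‖h x‖}.Finite) :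
    IsCompactOperator (mulCLM h C hC) := by
  set s : ℕ → Finset Γ := fun n =>
    (hcf (1 / (n + 1)) (by positivity)).toFinset with hs
  set F : ℕ → ((lp (fun _ : Γ => ℂ) 2) →L[ℂ] (lp (fun _ : Γ => ℂ) 2)) := fun n =>
    ∑ x ∈ s n, ((evalCLM x).smulRight (h x • lp.single 2 x (1 : ℂ))) with hF
  have hcoord : ∀ (n : ℕ) (ξ : lp (fun _ : Γ => ℂ) 2) (y : Γ),
      (F n ξ) y = if y ∈ s n then h y * ξ y else 0 := by
    intro n ξ y
    have h1 : F n ξ = ∑ x ∈ s n, ξ x • (h x • lp.single 2 x (1 : ℂ)) := by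
      simp [hF, ContinuousLinearMap.sum_apply, ContinuousLinearMap.smulRight_apply]
    rw [h1, lp.coeFn_sum, Finset.sum_apply]
    have h2 : ∀ x ∈ s n, (ξ x • (h x • lp.single 2 x (1 : ℂ)) :
        lp (fun _ : Γ => ℂ) 2) y = if y = x then h x * ξ x else 0 := by
      intro x _
      rw [lp.coeFn_smul, Pi.smul_apply, lp.coeFn_smul, Pi.smul_apply, single_coord]
      by_cases hyx : y = x
      · simp [hyx, smul_eq_mul]; ring
      · simp [hyx]
    rw [Finset.sum_congr rfl h2, Finset.sum_ite_eq]
  have hbound : ∀ n : ℕ, ‖F n - mulCLM h C hC‖ ≤ 1 / (n + 1) := by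
    intro n
    refine ContinuousLinearMap.opNorm_le_bound _ (by positivity) (fun ξ => ?_)
    refine norm_le_of_forall_norm_apply_le (by positivity) (fun y => ?_)
    have : ((F n - mulCLM h C hC) ξ) y = (F n ξ) y - h y * ξ y := by
      rw [ContinuousLinearMap.sub_apply, lp.coeFn_sub, Pi.sub_apply, mulCLM_apply]
    rw [this, hcoord]
    by_cases hy : y ∈ s n
    · simp [hy]
      positivity
    · rw [if_neg hy]
      have : ¬ (1 / (n + 1 : ℝ) ≤ ‖h y‖) := by
        intro hcon
        exact hy ((hcf (1 / (n + 1)) (by positivity)).mem_toFinset.mpr hcon)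
      rw [zero_sub, norm_neg, norm_mul]
      exact mul_le_mul_of_nonneg_right (le_of_not_ge this) (norm_nonneg _)
  refine isCompactOperator_of_tendsto (l := atTop) (F := F) ?_ ?_
  · rw [tendsto_iff_norm_sub_tendsto_zero]
    refine squeeze_zero (fun n => norm_nonneg _) hbound ?_
    exact tendsto_one_div_add_atTop_nhds_zero_nat
  · refine Filter.Eventually.of_forall (fun n => ?_)
    have hco : ⇑(F n) = fun ξ =>
        ∑ x ∈ s n, ((evalCLM x).smulRight (h x • lp.single 2 x (1 : ℂ))) ξ := by
      funext ξ
      rw [hF]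
      simp [ContinuousLinearMap.sum_apply]
    show IsCompactOperator ⇑(F n)
    rw [hco]
    exact isCompactOperator_sum _ _ (fun x _ => isCompactOperator_smulRight _ _)

end Lem21Aux

open Lem21Aux in
/-- The left-translation analogue of the key step in the proof of the paper's Lemma 21.
Let `Γ` be a group, `γ ∈ Γ`, and let `f : Γ → ℂ` be a bounded function such that
`x ↦ f (γ * x) - f x` tends to `0` along the cofinite filter on `Γ`.  Then the commutator
of the left-translation unitary `u_γ` with the multiplication operator `M_f` is a
compact operator on `ℓ²(Γ)`. -/
theorem commutator_left_translation_mult_compact_of_cofinite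
    {Γ : Type*} [Group Γ] [DecidableEq Γ]
    (γ : Γ) (f : Γ → ℂ)
    (hf_bdd : ∃ C : ℝ, ∀ x : Γ, ‖f x‖ ≤ C)
    (hf : ∀ ε : ℝ, 0 < ε → {x : Γ | ε ≤ ‖f (γ * x) - f x‖}.Finite)
    (Mf : lp (fun _ : Γ => ℂ) 2 →L[ℂ] lp (fun _ : Γ => ℂ) 2)
    (hMf : ∀ (ξ : lp (fun _ : Γ => ℂ) 2) (x : Γ), Mf ξ x = f x * ξ x)
    (uγ : lp (fun _ : Γ => ℂ) 2 →L[ℂ] lp (fun _ : Γ => ℂ) 2)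
    (huγ : ∀ x : Γ, uγ (lp.single 2 x (1 : ℂ)) = lp.single 2 (γ * x) (1 : ℂ)) :
    IsCompactOperator (uγ ∘L Mf - Mf ∘L uγ) := by
  obtain ⟨C, hC⟩ := hf_bdd
  set h : Γ → ℂ := fun y => f (γ⁻¹ * y) - f y with hh
  have hhC : ∀ y, ‖h y‖ ≤ C + C := fun y =>
    (norm_sub_le _ _).trans (add_le_add (hC _) (hC _))
  have hhcf : ∀ ε : ℝ, 0 < ε → {y : Γ | ε ≤ ‖h y‖}.Finite := by
    intro ε hε
    refine ((hf ε hε).image (fun x => γ * x)).subset (fun y hy => ?_)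
    refine ⟨γ⁻¹ * y, ?_, by group⟩
    simp only [Set.mem_setOf_eq, mul_inv_cancel_left]
    calc ε ≤ ‖h y‖ := hy
      _ = ‖f y - f (γ⁻¹ * y)‖ := by rw [hh]; exact norm_sub_rev _ _
  -- `Mf` sends `single x 1` to `single x (f x)`
  have hMf_single : ∀ x : Γ, Mf (lp.single 2 x (1 : ℂ)) = lp.single 2 x (f x) := by
    intro x
    apply lp.ext
    funext y
    rw [hMf, single_coord, single_coord]
    by_cases hxy : y = x <;> simp [hxy]
  have huγ' : ∀ (x : Γ) (c : ℂ), uγ (lp.single 2 x c) = lp.single 2 (γ * x) c := by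
    intro x c
    have e1 : lp.single 2 x c = c • (lp.single 2 x (1 : ℂ) : lp (fun _ : Γ => ℂ) 2) := by
      rw [← lp.single_smul]; norm_num
    have e2 : lp.single 2 (γ * x) c =
        c • (lp.single 2 (γ * x) (1 : ℂ) : lp (fun _ : Γ => ℂ) 2) := by
      rw [← lp.single_smul]; norm_num
    rw [e1, map_smul, huγ x, e2]
  have key : uγ ∘L Mf - Mf ∘L uγ = (mulCLM h (C + C) hhC) ∘L uγ := by
    refine ext_single (fun x => ?_)
    apply lp.ext
    funext y
    rw [ContinuousLinearMap.sub_apply, lp.coeFn_sub, Pi.sub_apply]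
    rw [ContinuousLinearMap.comp_apply, ContinuousLinearMap.comp_apply,
      ContinuousLinearMap.comp_apply]
    rw [hMf_single, huγ' x (f x), huγ x, hMf, mulCLM_apply]
    rw [single_coord, single_coord]
    by_cases hxy : y = γ * x
    · subst hxy
      simp [hh, inv_mul_cancel_left]
    · simp [hxy]
  rw [key]
  exact (mult_compact hhC hhcf).comp_clm uγ
end
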